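/- Let Γ be obtained from a signed path P_m (m ≥ 2) and a disjoint signed graph H by identifying one endpoint of P_m with a vertex of H. Then for every real λ, the multiplicity of λ as an eigenvalue of A(Γ) is at most the multiplicity of λ as an eigenvalue of A(H) plus 1. -/

import Mathlib

open scoped Classical
open Polynomial Module


/-- The algebraic multiplicity of `lam` as an eigenvalue of a square real
matrix: its multiplicity as a root of the characteristic polynomial
(`0` if `lam` is not an eigenvalue). -/
noncomputable def Matrix.eigMult {n : Type*} [Fintype n] [DecidableEq n]
    (A : Matrix n n ℝ) (lam : ℝ) : ℕ :=
  A.charpoly.rootMultiplicity lam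

lemma charpoly_shift {n : Type*} [Fintype n] [DecidableEq n] (B : Matrix n n ℝ) (lam : ℝ) :
    (B - lam • 1).charpoly = B.charpoly.comp (X + C lam) := by
  have h : B.charpoly.comp (X + C lam)
      = ((Matrix.charmatrix B).map (Polynomial.eval₂RingHom Polynomial.C (X + C lam))).det := by
    rw [Matrix.charpoly]
    exact RingHom.map_det (Polynomial.eval₂RingHom Polynomial.C (X + C lam)) B.charmatrix
  rw [h, Matrix.charpoly]
  congr 1
  ext i j
  by_cases hij : i = j
  · subst hij
    simp [Matrix.charmatrix_apply_eq, Matrix.sub_apply, Matrix.smul_apply, Matrix.one_apply,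
      sub_sub, map_add]
    ring
  · simp [Matrix.charmatrix_apply_ne _ _ _ hij, Matrix.sub_apply, Matrix.smul_apply,
      Matrix.one_apply_ne hij]

lemma ker_pow_symm {n : Type*} [Fintype n] [DecidableEq n] (Cm : Matrix n n ℝ)
    (hC : Cm.IsSymm) : ∀ (m : ℕ) (x : n → ℝ), (Cm.mulVec^[m+1]) x = 0 → Cm.mulVec x = 0 := by
  have key : ∀ x : n → ℝ, Cm.mulVec (Cm.mulVec x) = 0 → Cm.mulVec x = 0 := by
    intro x hx
    have h0 : dotProduct (Cm.mulVec x) (Cm.mulVec x) = 0 := by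
      rw [Matrix.dotProduct_mulVec]
      have h2 : Matrix.vecMul (Cm.mulVec x) Cm = Cm.mulVec (Cm.mulVec x) := by
        rw [← Matrix.mulVec_transpose, hC.eq]
      rw [h2, hx, zero_dotProduct]
    exact dotProduct_self_eq_zero.mp h0
  intro m
  induction m with
  | zero => intro x hx; simpa using hx
  | succ m ih =>
    intro x hx
    apply key
    apply ih
    rw [Function.iterate_succ_apply] at hx
    exact hx

lemma eigMult_eq_finrank_ker {n : Type*} [Fintype n] [DecidableEq n]
    (B : Matrix n n ℝ) (hB : B.IsSymm) (lam : ℝ) :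
    B.eigMult lam = finrank ℝ (LinearMap.ker (Matrix.toLin' (B - lam • 1))) := by
  classical
  set Cm : Matrix n n ℝ := B - lam • 1 with hCm
  have hCs : Cm.IsSymm := by
    unfold Matrix.IsSymm
    rw [hCm, Matrix.transpose_sub, hB.eq, Matrix.transpose_smul, Matrix.transpose_one]
  set φ : Module.End ℝ (n → ℝ) := Matrix.toLin' Cm with hφ
  have hchar : Cm.charpoly = φ.charpoly := by
    rw [← LinearMap.charpoly_toMatrix φ (Pi.basisFun ℝ n), LinearMap.toMatrix_eq_toMatrix',
      LinearMap.toMatrix'_toLin']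
  have h1 : B.eigMult lam = φ.charpoly.natTrailingDegree := by
    rw [Matrix.eigMult, Polynomial.rootMultiplicity_eq_natTrailingDegree, ← charpoly_shift, hchar]
  have hsub : φ.maxGenEigenspace 0 = LinearMap.ker φ := by
    ext x
    rw [Module.End.mem_maxGenEigenspace]
    simp only [zero_smul, sub_zero, LinearMap.mem_ker]
    constructor
    · rintro ⟨m, hm⟩
      cases m with
      | zero => simp only [pow_zero, Module.End.one_apply] at hm; simp [hm]
      | succ m =>
        have hiter : ∀ (j : ℕ) (y : n → ℝ), (φ ^ j) y = (Cm.mulVec^[j]) y := by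
          intro j
          induction j with
          | zero => intro y; simp
          | succ j ih =>
            intro y
            rw [pow_succ', Function.iterate_succ_apply']
            simp only [Module.End.mul_apply]
            rw [ih y, hφ, Matrix.toLin'_apply]
        have := ker_pow_symm Cm hCs m x (by rw [← hiter]; exact hm)
        simpa [hφ, Matrix.toLin'_apply] using this
    · intro hx
      exact ⟨1, by simpa using hx⟩
  rw [h1, ← LinearMap.finrank_maxGenEigenspace_zero_eq, hsub]

open scoped Classical


/-- Let `Γ` be obtained from a signed path `Pₘ` (`m ≥ 2`) and
a disjoint signed graph `H` by identifying one endpoint of the path with a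
vertex `u` of `H` (so `k = m − 1 ≥ 1` new vertices are attached).  Then for
every real `λ`, `m(Γ, λ) ≤ m(H, λ) + 1`. -/
theorem eigMult_pendant_path {W : Type*} [Fintype W] [DecidableEq W]
    (G : SimpleGraph W) (σ : W → W → ℝ)
    (hsym : ∀ x y, σ x y = σ y x)
    (hσ : ∀ x y, G.Adj x y → σ x y = 1 ∨ σ x y = -1)
    (AH : Matrix W W ℝ)
    (hAH : ∀ x y, AH x y = if G.Adj x y then σ x y else 0)
    (k : ℕ) (hk : 1 ≤ k) (u : W)
    (τ : Fin k → ℝ) (hτ : ∀ i, τ i = 1 ∨ τ i = -1)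
    (A : Matrix (W ⊕ Fin k) (W ⊕ Fin k) ℝ)
    (hsymA : A.IsSymm)
    (hA1 : ∀ x y : W, A (Sum.inl x) (Sum.inl y) = AH x y)
    (hA2 : ∀ (x : W) (i : Fin k),
      A (Sum.inl x) (Sum.inr i) =
        if x = u ∧ (i : ℕ) = 0 then τ ⟨0, hk⟩ else 0)
    (hA3 : ∀ i j : Fin k,
      A (Sum.inr i) (Sum.inr j) =
        if (i : ℕ) + 1 = (j : ℕ) then τ j
        else if (j : ℕ) + 1 = (i : ℕ) then τ i else 0) :
    ∀ lam : ℝ, A.eigMult lam ≤ AH.eigMult lam + 1 := by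
  intro lam
  have hAHsym : AH.IsSymm := by
    apply Matrix.IsSymm.ext
    intro i j
    rw [hAH, hAH]
    by_cases h : G.Adj i j
    · rw [if_pos h.symm, if_pos h, hsym]
    · rw [if_neg (fun h' => h h'.symm), if_neg h]
  rw [eigMult_eq_finrank_ker A hsymA lam, eigMult_eq_finrank_ker AH hAHsym lam]
  set KA := LinearMap.ker (Matrix.toLin' (A - lam • 1)) with hKA
  set KH := LinearMap.ker (Matrix.toLin' (AH - lam • 1)) with hKH
  have hτne : ∀ i, τ i ≠ 0 := by
    intro i; rcases hτ i with h | h <;> rw [h] <;> norm_num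
  -- kernel membership characterization
  have hkerA : ∀ x, x ∈ KA ↔ ∀ s, A.mulVec x s = lam * x s := by
    intro x
    rw [hKA, LinearMap.mem_ker, Matrix.toLin'_apply, Matrix.sub_mulVec,
      Matrix.smul_mulVec, Matrix.one_mulVec, sub_eq_zero, funext_iff]
    exact forall_congr' fun s => by simp
  have hkerH : ∀ y, y ∈ KH ↔ ∀ w, AH.mulVec y w = lam * y w := by
    intro y
    rw [hKH, LinearMap.mem_ker, Matrix.toLin'_apply, Matrix.sub_mulVec,
      Matrix.smul_mulVec, Matrix.one_mulVec, sub_eq_zero, funext_iff]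
    exact forall_congr' fun w => by simp
  have hmv : ∀ (x : (W ⊕ Fin k) → ℝ) (s : W ⊕ Fin k),
      A.mulVec x s = (∑ w : W, A s (Sum.inl w) * x (Sum.inl w))
        + ∑ j : Fin k, A s (Sum.inr j) * x (Sum.inr j) := by
    intro x s
    rw [Matrix.mulVec, dotProduct, Fintype.sum_sum_type]
  set last : Fin k := ⟨k - 1, by omega⟩ with hlast
  -- key lemma: vanishing at the pendant end forces the whole path to vanish
  have hpath : ∀ x : (W ⊕ Fin k) → ℝ, (∀ s, A.mulVec x s = lam * x s) →
      x (Sum.inr last) = 0 → ∀ i : Fin k, x (Sum.inr i) = 0 := by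
    intro x hx hlast0
    have main : ∀ d : ℕ, ∀ i : Fin k, (i : ℕ) + d + 1 = k → x (Sum.inr i) = 0 := by
      intro d
      induction d using Nat.strong_induction_on with
      | _ d IH =>
        intro i hi
        match d, IH with
        | 0, _ =>
          have : i = last := by
            apply Fin.ext; simp only [hlast]; omega
          rw [this]; exact hlast0
        | e + 1, IH =>
          have hi1 : (i : ℕ) + 1 < k := by omega
          set i' : Fin k := ⟨(i : ℕ) + 1, hi1⟩ with hi'
          have hxi' : x (Sum.inr i') = 0 := IH e (by omega) i' (by simp [hi']; omega)
          have heq := hx (Sum.inr i')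
          rw [hmv] at heq
          have hW0 : ∑ w : W, A (Sum.inr i') (Sum.inl w) * x (Sum.inl w) = 0 := by
            apply Finset.sum_eq_zero
            intro w _
            rw [hsymA.apply, hA2]
            have : ¬(w = u ∧ (i' : ℕ) = 0) := by
              rintro ⟨_, h0⟩; simp [hi'] at h0
            rw [if_neg this, zero_mul]
          have hF : ∑ j : Fin k, A (Sum.inr i') (Sum.inr j) * x (Sum.inr j)
              = τ i' * x (Sum.inr i) := by
            rw [Finset.sum_eq_single i]
            · rw [hA3]
              have h1 : ¬((i' : ℕ) + 1 = (i : ℕ)) := by simp [hi']; omega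
              have h2 : (i : ℕ) + 1 = (i' : ℕ) := by simp [hi']
              rw [if_neg h1, if_pos h2]
            · intro j _ hji
              rw [hA3]
              by_cases hb1 : (i' : ℕ) + 1 = (j : ℕ)
              · rw [if_pos hb1]
                have hjv : (j : ℕ) = (i : ℕ) + 2 := by simp [hi'] at hb1; omega
                have he1 : 1 ≤ e := by have := j.isLt; omega
                have : x (Sum.inr j) = 0 := IH (e - 1) (by omega) j (by omega)
                rw [this, mul_zero]
              · rw [if_neg hb1]
                have hb2 : ¬((j : ℕ) + 1 = (i' : ℕ)) := by
                  intro h; apply hji; apply Fin.ext; simp [hi'] at h; omega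
                rw [if_neg hb2, zero_mul]
            · intro h; exact absurd (Finset.mem_univ i) h
          rw [hW0, hF, zero_add, hxi', mul_zero] at heq
          exact (mul_eq_zero.mp heq).resolve_left (hτne i')
    intro i
    exact main (k - 1 - (i : ℕ)) i (by have := i.isLt; omega)
  -- restriction of a kernel vector vanishing on the path lies in KH
  have hrestrict : ∀ x : (W ⊕ Fin k) → ℝ, (∀ s, A.mulVec x s = lam * x s) →
      (∀ i : Fin k, x (Sum.inr i) = 0) → (x ∘ Sum.inl) ∈ KH := by
    intro x hx hzero
    rw [hkerH]
    intro w
    have heq := hx (Sum.inl w)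
    rw [hmv] at heq
    have hF0 : ∑ j : Fin k, A (Sum.inl w) (Sum.inr j) * x (Sum.inr j) = 0 := by
      apply Finset.sum_eq_zero
      intro j _
      rw [hzero j, mul_zero]
    rw [hF0, add_zero] at heq
    have : AH.mulVec (x ∘ Sum.inl) w = ∑ w' : W, A (Sum.inl w) (Sum.inl w') * x (Sum.inl w') := by
      rw [Matrix.mulVec, dotProduct]
      exact Finset.sum_congr rfl fun w' _ => by rw [hA1, Function.comp_apply]
    rw [this, heq]
    rfl
  -- linear maps
  let f : KA →ₗ[ℝ] ℝ := (LinearMap.proj (Sum.inr last)).comp KA.subtype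
  let g : LinearMap.ker f →ₗ[ℝ] (W → ℝ) :=
    (LinearMap.funLeft ℝ ℝ Sum.inl).comp (KA.subtype.comp (LinearMap.ker f).subtype)
  have hgmem : ∀ z : LinearMap.ker f, g z ∈ KH := by
    intro z
    have hz1 : (z : KA).1 ∈ KA := (z : KA).2
    have hz2 : ((z : KA) : (W ⊕ Fin k) → ℝ) (Sum.inr last) = 0 := z.2
    have hx := (hkerA _).mp hz1
    have hzero := hpath _ hx hz2
    exact hrestrict _ hx hzero
  have hginj : Function.Injective g := by
    intro z₁ z₂ hz
    have hsub : ∀ z : LinearMap.ker f, g z = 0 → z = 0 := by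
      intro z hgz
      have hz2 : ((z : KA) : (W ⊕ Fin k) → ℝ) (Sum.inr last) = 0 := z.2
      have hx := (hkerA _).mp (z : KA).2
      have hzero := hpath _ hx hz2
      have hfun : ((z : KA) : (W ⊕ Fin k) → ℝ) = 0 := by
        funext s
        cases s with
        | inl w => exact congrFun hgz w
        | inr j => exact hzero j
      ext1
      ext1
      rw [hfun]; rfl
    set_option synthInstance.maxHeartbeats 1000000 in
    rw [← sub_eq_zero]
    apply hsub
    rw [map_sub, hz, sub_self]
  have hrange : LinearMap.range g ≤ KH := by
    rintro y ⟨z, rfl⟩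
    exact hgmem z
  have hrank := LinearMap.finrank_range_add_finrank_ker f
  have h1 : Module.finrank ℝ (LinearMap.range f) ≤ 1 := by
    simpa using Submodule.finrank_le (LinearMap.range f)
  have h2 : Module.finrank ℝ (LinearMap.ker f) ≤ Module.finrank ℝ KH := by
    rw [← LinearMap.finrank_range_of_inj hginj]
    exact Submodule.finrank_mono hrange
  omega
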